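/- arXiv:1310.1173 — 2 statements merged into one kernel-verified Lean document; each statement's English description precedes it below -/
import Mathlib

section
/- Let d ≥ 1, Δt > 0, let a₀ be a symmetric positive definite d×d real matrix and a a symmetric positive semidefinite d×d real matrix. Define η(a,x) := 1 − (1/2)·Tr(a·a₀^{−1}) + (1/(2Δt))·xᵀa₀^{−1}·a·a₀^{−1}x and ρ(a,x) := (2πΔt)^{−d/2}·(det a₀)^{−1/2}·exp(−xᵀa₀^{−1}x/(2Δt))·η(a,x) for x ∈ ℝ^d. Then: (i) ∫_{ℝ^d} ρ(a,x) dx = 1; (ii) ∫_{ℝ^d} x·ρ(a,x) dx = 0 (componentwise); (iii) if Tr(a·a₀^{−1}) ≤ 2, then ρ(a,x) ≥ 0 for all x ∈ ℝ^d, so that ρ(a,·) is a probability density on ℝ^d. -/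
open MeasureTheory ProbabilityTheory Matrix Real Finset

noncomputable section

abbrev Mat (d : ℕ) : Type := Matrix (Fin d) (Fin d) ℝ

/-- The polynomial weight `η(a,x) = 1 − ½·Tr(a·a₀⁻¹) + (1/(2Δt))·xᵀa₀⁻¹·a·a₀⁻¹x`. -/
def eta (d : ℕ) (Δt : ℝ) (a₀ a : Mat d) (x : Fin d → ℝ) : ℝ :=
  1 - (1 / 2) * (a * a₀⁻¹).trace
    + (1 / (2 * Δt)) * (x ⬝ᵥ (a₀⁻¹ * a * a₀⁻¹).mulVec x)

/-- The density `ρ(a,x)` of the probabilistic scheme: a centered Gaussian density with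
covariance `a₀·Δt` multiplied by the polynomial weight `η(a,·)`. -/
def rho (d : ℕ) (Δt : ℝ) (a₀ a : Mat d) (x : Fin d → ℝ) : ℝ :=
  (2 * Real.pi * Δt) ^ (-(d : ℝ) / 2) * (a₀.det) ^ (-(1 : ℝ) / 2)
    * Real.exp (-(x ⬝ᵥ a₀⁻¹.mulVec x) / (2 * Δt)) * eta d Δt a₀ a x


lemma sq_mul_exp_le (x : ℝ) : x^2 * exp (-x^2/2) ≤ 4 * exp (-(1/4) * x^2) := by
  have h1 : x^2/4 ≤ exp (x^2/4) := le_trans (by linarith [Real.add_one_le_exp (x^2/4)]) (le_refl _)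
  have h2 : x^2 ≤ 4 * exp (x^2/4) := by linarith
  calc x^2 * exp (-x^2/2) ≤ 4 * exp (x^2/4) * exp (-x^2/2) :=
        mul_le_mul_of_nonneg_right h2 (exp_nonneg _)
    _ = 4 * exp (-(1/4) * x^2) := by rw [mul_assoc, ← exp_add]; ring_nf

lemma meas_gauss (n : ℕ) : Measurable (fun x : ℝ => x^n * exp (-x^2/2)) :=
  (measurable_id.pow_const n).mul (((measurable_id.pow_const 2).neg.div_const 2).exp)

lemma integrable_sq_gauss : Integrable (fun x : ℝ => x^2 * exp (-x^2/2)) := by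
  refine Integrable.mono' ((integrable_exp_neg_mul_sq (b := 1/4) (by norm_num)).const_mul 4)
    (meas_gauss 2).aestronglyMeasurable (ae_of_all _ fun x => ?_)
  rw [Real.norm_eq_abs, abs_mul, abs_of_nonneg (sq_nonneg x), abs_of_nonneg (exp_nonneg _)]
  exact sq_mul_exp_le x

lemma integrable_id_gauss : Integrable (fun x : ℝ => x * exp (-x^2/2)) := by
  refine Integrable.mono' ((integrable_exp_neg_mul_sq (b := 1/2) (by norm_num)).add
    ((integrable_exp_neg_mul_sq (b := 1/4) (by norm_num)).const_mul 4))
    (by simpa using (meas_gauss 1).aestronglyMeasurable) (ae_of_all _ fun x => ?_)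
  rw [Real.norm_eq_abs, abs_mul, abs_of_nonneg (exp_nonneg _)]
  have hx : |x| ≤ 1 + x^2 := by
    rcases le_or_gt (|x|) 1 with h | h
    · nlinarith [sq_nonneg x]
    · nlinarith [sq_abs x]
  have h3 : |x| * exp (-x^2/2) ≤ (1 + x^2) * exp (-x^2/2) :=
    mul_le_mul_of_nonneg_right hx (exp_nonneg _)
  have h2 := sq_mul_exp_le x
  have hexp : exp (-x^2/2) = exp (-(1/2)*x^2) := by ring_nf
  simp only [Pi.add_apply]
  nlinarith [exp_nonneg (-x^2/2)]

lemma integral_exp_gauss : ∫ x : ℝ, exp (-x^2/2) = √(2*π) := by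
  have : ∀ x : ℝ, exp (-x^2/2) = exp (-(1/2) * x^2) := fun x => by ring_nf
  simp_rw [this, integral_gaussian]
  rw [div_div_eq_mul_div, div_one, mul_comm]

lemma integrable_exp_gauss : Integrable (fun x : ℝ => exp (-x^2/2)) := by
  have := integrable_exp_neg_mul_sq (b := 1/2) (by norm_num)
  refine this.congr (ae_of_all _ fun x => by ring_nf)

lemma integral_id_gauss : ∫ x : ℝ, x * exp (-x^2/2) = 0 := by
  have h := integral_neg_eq_self (fun x : ℝ => x * exp (-x^2/2)) (volume : Measure ℝ)
  simp only [neg_sq, neg_mul] at h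
  rw [integral_neg] at h
  linarith

lemma integral_sq_gauss : ∫ x : ℝ, x^2 * exp (-x^2/2) = √(2*π) := by
  have hF : ∀ x : ℝ, HasDerivAt (fun y : ℝ => y * exp (-y^2/2))
      (exp (-x^2/2) - x^2 * exp (-x^2/2)) x := by
    intro x
    have hg : HasDerivAt (fun y : ℝ => exp (-y^2/2)) (exp (-x^2/2) * (-x)) x := by
      have h1 : HasDerivAt (fun y : ℝ => -y^2/2) (-x) x := by
        have : HasDerivAt (fun y : ℝ => -y^2/2) (-(↑2 * x ^ (2 - 1)) / 2) x := ((hasDerivAt_pow 2 x).neg.div_const 2)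
        convert this using 1; ring
      exact h1.exp.congr_deriv (by ring)
    have : HasDerivAt (fun y : ℝ => y * exp (-y^2/2)) (1 * exp (-x^2/2) + id x * (exp (-x^2/2) * -x)) x := (hasDerivAt_id x).mul hg
    convert this using 1; simp [id]; ring
  have h0 : ∫ x : ℝ, (exp (-x^2/2) - x^2 * exp (-x^2/2)) = 0 :=
    integral_eq_zero_of_hasDerivAt_of_integrable hF
      (integrable_exp_gauss.sub integrable_sq_gauss) integrable_id_gauss
  rw [integral_sub integrable_exp_gauss integrable_sq_gauss, integral_exp_gauss] at h0
  linarith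

-- the 1D factor functions
noncomputable def gfun (d : ℕ) (i j k : Fin d) : ℝ → ℝ :=
  fun x => (if k = i then x else 1) * (if k = j then x else 1) * exp (-x^2/2)

lemma gfun_integrable {d : ℕ} (i j k : Fin d) : Integrable (gfun d i j k) := by
  unfold gfun
  by_cases hki : k = i <;> by_cases hkj : k = j
  · subst hki
    simp only [if_pos rfl, if_pos hkj]
    simpa [← sq] using integrable_sq_gauss
  · subst hki
    simp only [if_pos rfl, if_neg hkj, mul_one]
    exact integrable_id_gauss
  · subst hkj
    simp only [if_neg hki, if_pos rfl, one_mul]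
    exact integrable_id_gauss
  · simp only [if_neg hki, if_neg hkj, one_mul]
    exact integrable_exp_gauss

lemma gfun_integral {d : ℕ} (i j k : Fin d) (hij : i = j) : ∫ x, gfun d i j k x = √(2*π) := by
  unfold gfun
  subst hij
  by_cases hki : k = i
  · subst hki
    simp only [if_pos rfl]
    simpa [← sq] using integral_sq_gauss
  · simp only [if_neg hki, one_mul]
    exact integral_exp_gauss

lemma prod_gfun_eq {d : ℕ} (i j : Fin d) (u : Fin d → ℝ) :
    ∏ k, gfun d i j k (u k) = (∏ k, exp (-(u k)^2/2)) * (u i * u j) := by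
  unfold gfun
  rw [prod_mul_distrib, prod_mul_distrib]
  rw [Finset.prod_ite_eq' univ i u, Finset.prod_ite_eq' univ j u]
  simp [mul_comm, mul_assoc, mul_left_comm]

lemma integral_moment {d : ℕ} (i j : Fin d) :
    ∫ u : Fin d → ℝ, (∏ k, exp (-(u k)^2/2)) * (u i * u j)
      = (if i = j then √(2*π)^d else 0) := by
  simp_rw [← prod_gfun_eq i j]
  rw [MeasureTheory.integral_fintype_prod_volume_eq_prod (fun k => gfun d i j k)]
  by_cases hij : i = j
  · rw [if_pos hij]
    calc ∏ k, ∫ x, gfun d i j k x = ∏ _k : Fin d, √(2*π) :=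
          Finset.prod_congr rfl fun k _ => gfun_integral i j k hij
      _ = √(2*π)^d := by rw [prod_const, card_univ, Fintype.card_fin]
  · rw [if_neg hij]
    refine Finset.prod_eq_zero (mem_univ i) ?_
    unfold gfun
    simp only [if_pos rfl, if_neg (fun h => hij h), mul_one]
    simpa using integral_id_gauss

lemma integrable_moment {d : ℕ} (i j : Fin d) :
    Integrable (fun u : Fin d → ℝ => (∏ k, exp (-(u k)^2/2)) * (u i * u j)) := by
  simp_rw [← prod_gfun_eq i j]
  exact Integrable.fintype_prod (fun k => gfun_integrable i j k)

lemma integrable_gauss_pi (d : ℕ) :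
    Integrable (fun u : Fin d → ℝ => ∏ k, exp (-(u k)^2/2)) :=
  Integrable.fintype_prod (fun _ => integrable_exp_gauss)

lemma integral_gauss_pi (d : ℕ) :
    ∫ u : Fin d → ℝ, ∏ k, exp (-(u k)^2/2) = √(2*π)^d := by
  rw [MeasureTheory.integral_fintype_prod_volume_eq_pow (fun x : ℝ => exp (-x^2/2)),
    integral_exp_gauss, Fintype.card_fin]


lemma integral_comp_mulVec {d : ℕ} (M : Matrix (Fin d) (Fin d) ℝ) (hM : M.det ≠ 0)
    (g : (Fin d → ℝ) → ℝ) :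
    ∫ x, g x = |M.det| * ∫ u, g (M.mulVec u) := by
  have hI : Invertible M := M.invertibleOfIsUnitDet (isUnit_iff_ne_zero.2 hM)
  let e := (M.toLinearEquiv' hI).toContinuousLinearEquiv
  let m : (Fin d → ℝ) ≃ᵐ (Fin d → ℝ) := e.toHomeomorph.toMeasurableEquiv
  have hdet : LinearMap.det (Matrix.toLin' M) = M.det := LinearMap.det_toLin' M
  have hmap : Measure.map m (volume : Measure (Fin d → ℝ))
      = ENNReal.ofReal |M.det|⁻¹ • volume := by
    have := Real.map_linearMap_volume_pi_eq_smul_volume_pi (f := Matrix.toLin' M) (by rw [hdet]; exact hM)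
    rw [hdet] at this
    rw [abs_inv] at this
    convert this using 2
    rfl
  have h1 : ∫ u, g (M.mulVec u) = ∫ x, g x ∂(Measure.map m volume) := by
    rw [integral_map_equiv]
    rfl
  rw [h1, hmap, integral_smul_measure, ENNReal.toReal_ofReal (by positivity), smul_eq_mul,
    ← mul_assoc, mul_inv_cancel₀ (by simpa using hM), one_mul]

lemma quad_comp {d : ℕ} (S N : Mat d) (hS : Sᵀ = S) (u : Fin d → ℝ) :
    (S.mulVec u) ⬝ᵥ N.mulVec (S.mulVec u) = u ⬝ᵥ (S * N * S).mulVec u := by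
  rw [Matrix.mulVec_mulVec, dotProduct_comm, Matrix.dotProduct_mulVec,
    ← Matrix.mulVec_transpose, hS, Matrix.mulVec_mulVec, Matrix.mul_assoc,
    dotProduct_comm, Matrix.dotProduct_mulVec, ← Matrix.mulVec_transpose]


lemma rho_neg (d : ℕ) (Δt : ℝ) (a₀ a : Mat d) (x : Fin d → ℝ) :
    rho d Δt a₀ a (-x) = rho d Δt a₀ a x := by
  unfold rho eta
  simp [Matrix.mulVec_neg, dotProduct_neg, neg_dotProduct]

open scoped MatrixOrder in
lemma mat_sqrt_exists {d : ℕ} (A : Mat d) (hA : A.PosSemidef) :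
    ∃ S : Mat d, S.PosSemidef ∧ S * S = A :=
  ⟨CFC.sqrt A, Matrix.nonneg_iff_posSemidef.mp (CFC.sqrt_nonneg A),
    CFC.sqrt_mul_sqrt_self A (Matrix.nonneg_iff_posSemidef.mpr hA)⟩

/-- **The weight of the probabilistic scheme is a probability density.**
Let `d ≥ 1`, `Δt > 0`, `a₀` symmetric positive definite and `a` symmetric positive
semidefinite.  Then (i) `∫ ρ(a,x) dx = 1`; (ii) `∫ x·ρ(a,x) dx = 0` componentwise;
(iii) if `Tr(a·a₀⁻¹) ≤ 2` then `ρ(a,·) ≥ 0`, so `ρ(a,·)` is a probability density. -/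
theorem probabilistic_scheme_density
    (d : ℕ) (hd : 1 ≤ d) (Δt : ℝ) (hΔt : 0 < Δt)
    (a₀ a : Mat d) (ha₀ : a₀.PosDef) (ha : a.PosSemidef) :
    ((∫ x : Fin d → ℝ, rho d Δt a₀ a x) = 1) ∧
    (∀ i : Fin d, (∫ x : Fin d → ℝ, x i * rho d Δt a₀ a x) = 0) ∧
    ((a * a₀⁻¹).trace ≤ 2 → ∀ x : Fin d → ℝ, 0 ≤ rho d Δt a₀ a x) := by
  refine ⟨?_, ?_, ?_⟩
  · -- (i) total mass one
    classical
    obtain ⟨S, hSsd, hSS⟩ := mat_sqrt_exists a₀ ha₀.posSemidef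
    have hSsym : Sᵀ = S := hSsd.1
    have hdetA : 0 < a₀.det := ha₀.det_pos
    have hdetS2 : S.det * S.det = a₀.det := by rw [← Matrix.det_mul, hSS]
    have hSdet_ne : S.det ≠ 0 := by
      intro h; rw [h] at hdetS2; nlinarith
    have hSinv : S * S⁻¹ = 1 := Matrix.mul_nonsing_inv _ (isUnit_iff_ne_zero.2 hSdet_ne)
    have hinvS : S⁻¹ * S = 1 := Matrix.nonsing_inv_mul _ (isUnit_iff_ne_zero.2 hSdet_ne)
    have ha₀inv : a₀⁻¹ = S⁻¹ * S⁻¹ := by rw [← hSS, Matrix.mul_inv_rev]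
    have key1 : S * a₀⁻¹ * S = 1 := by
      rw [ha₀inv, ← Matrix.mul_assoc, Matrix.mul_assoc (S * S⁻¹), hinvS,
        Matrix.mul_one, hSinv]
    set N : Mat d := S⁻¹ * a * S⁻¹ with hNdef
    have key2 : S * (a₀⁻¹ * a * a₀⁻¹) * S = N := by
      rw [ha₀inv, hNdef]
      calc S * (S⁻¹ * S⁻¹ * a * (S⁻¹ * S⁻¹)) * S
          = (S * S⁻¹) * (S⁻¹ * a * S⁻¹) * (S⁻¹ * S) := by
            simp only [Matrix.mul_assoc]
        _ = S⁻¹ * a * S⁻¹ := by rw [hSinv, hinvS]; simp [Matrix.mul_assoc]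
    have htrN : N.trace = (a * a₀⁻¹).trace := by
      rw [hNdef, Matrix.trace_mul_cycle, ← ha₀inv, Matrix.trace_mul_comm]
    set T : Mat d := Real.sqrt Δt • S with hTdef
    have hsq : Real.sqrt Δt * Real.sqrt Δt = Δt := Real.mul_self_sqrt hΔt.le
    have hTdet : T.det = (Real.sqrt Δt)^d * S.det := by
      rw [hTdef, Matrix.det_smul, Fintype.card_fin]
    have hTdet_ne : T.det ≠ 0 := by
      rw [hTdet]; positivity
    set c₀ : ℝ := (2 * Real.pi * Δt) ^ (-(d : ℝ) / 2) * (a₀.det) ^ (-(1 : ℝ) / 2) with hc₀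
    set α : ℝ := 1 - (1 / 2) * (a * a₀⁻¹).trace with hα
    -- pointwise identity
    have hpoint : ∀ u : Fin d → ℝ, rho d Δt a₀ a (T.mulVec u)
        = c₀ * ((∏ k, exp (-(u k)^2/2)) * (α + (1/2) * (u ⬝ᵥ N.mulVec u))) := by
      intro u
      have hTu : T.mulVec u = Real.sqrt Δt • (S.mulVec u) := by
        rw [hTdef, Matrix.smul_mulVec]
      have hquad : ∀ M : Mat d, (T.mulVec u) ⬝ᵥ M.mulVec (T.mulVec u)
          = Δt * (u ⬝ᵥ (S * M * S).mulVec u) := by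
        intro M
        rw [hTu, Matrix.mulVec_smul, smul_dotProduct, dotProduct_smul, smul_eq_mul,
          smul_eq_mul, ← mul_assoc, hsq, quad_comp S M hSsym]
      have h1 : (T.mulVec u) ⬝ᵥ a₀⁻¹.mulVec (T.mulVec u) = Δt * (u ⬝ᵥ u) := by
        rw [hquad a₀⁻¹, key1, Matrix.one_mulVec]
      have h2 : (T.mulVec u) ⬝ᵥ (a₀⁻¹ * a * a₀⁻¹).mulVec (T.mulVec u)
          = Δt * (u ⬝ᵥ N.mulVec u) := by
        rw [hquad _, key2]
      unfold rho eta
      rw [h1, h2]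
      have hexp : Real.exp (-(Δt * (u ⬝ᵥ u)) / (2 * Δt)) = ∏ k, exp (-(u k)^2/2) := by
        have hdot : u ⬝ᵥ u = ∑ k, (u k)^2 := by simp [dotProduct, sq]
        have : -(Δt * (u ⬝ᵥ u)) / (2 * Δt) = ∑ k, (-(u k)^2/2) := by
          rw [hdot, ← Finset.sum_div, Finset.sum_neg_distrib]
          field_simp
        rw [this, Real.exp_sum]
      rw [hexp]
      have : 1 - 1 / 2 * (a * a₀⁻¹).trace + 1 / (2 * Δt) * (Δt * (u ⬝ᵥ N.mulVec u))
          = α + (1/2) * (u ⬝ᵥ N.mulVec u) := by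
        rw [hα]; field_simp
      rw [this, hc₀]; ring
    -- change of variables
    rw [integral_comp_mulVec T hTdet_ne]
    simp_rw [hpoint]
    -- expand the integrand
    have hq : ∀ u : Fin d → ℝ, u ⬝ᵥ N.mulVec u = ∑ i, ∑ j, N i j * (u i * u j) := by
      intro u
      simp only [dotProduct, Matrix.mulVec, Finset.mul_sum]
      exact Finset.sum_congr rfl fun i _ => Finset.sum_congr rfl fun j _ => by
        ring
    have hsplit : ∀ u : Fin d → ℝ,
        (∏ k, exp (-(u k)^2/2)) * (α + (1/2) * (u ⬝ᵥ N.mulVec u))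
        = α * (∏ k, exp (-(u k)^2/2))
          + (1/2) * ∑ i, ∑ j, N i j * ((∏ k, exp (-(u k)^2/2)) * (u i * u j)) := by
      intro u
      rw [hq u]
      have : (∏ k, exp (-(u k)^2/2)) * (∑ i, ∑ j, N i j * (u i * u j))
          = ∑ i, ∑ j, N i j * ((∏ k, exp (-(u k)^2/2)) * (u i * u j)) := by
        rw [Finset.mul_sum]
        refine Finset.sum_congr rfl fun i _ => ?_
        rw [Finset.mul_sum]
        exact Finset.sum_congr rfl fun j _ => by ring
      calc (∏ k, exp (-(u k)^2/2)) * (α + 1 / 2 * ∑ i, ∑ j, N i j * (u i * u j))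
          = α * (∏ k, exp (-(u k)^2/2))
            + (1/2) * ((∏ k, exp (-(u k)^2/2)) * ∑ i, ∑ j, N i j * (u i * u j)) := by ring
        _ = _ := by rw [this]
    simp_rw [hsplit]
    -- integrate
    have hint2 : Integrable (fun u : Fin d → ℝ =>
        ∑ i, ∑ j, N i j * ((∏ k, exp (-(u k)^2/2)) * (u i * u j))) := by
      refine integrable_finset_sum _ fun i _ => integrable_finset_sum _ fun j _ => ?_
      exact (integrable_moment i j).const_mul _
    rw [integral_const_mul]
    rw [integral_add ((integrable_gauss_pi d).const_mul α) (hint2.const_mul (1/2)),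
      integral_const_mul, integral_const_mul, integral_finset_sum _ (fun i _ => ?_)]
    swap
    · exact integrable_finset_sum _ fun j _ => (integrable_moment i j).const_mul _
    have : ∀ i : Fin d, ∫ u : Fin d → ℝ,
        ∑ j, N i j * ((∏ k, exp (-(u k)^2/2)) * (u i * u j))
        = ∑ j, N i j * (if i = j then √(2*π)^d else 0) := by
      intro i
      rw [integral_finset_sum _ (fun j _ => (integrable_moment i j).const_mul _)]
      exact Finset.sum_congr rfl fun j _ => by rw [integral_const_mul, integral_moment]
    simp_rw [this, mul_ite, mul_zero, Finset.sum_ite_eq univ _ (fun j => N _ j * √(2*π)^d),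
      if_pos (Finset.mem_univ _)]
    rw [integral_gauss_pi, ← Finset.sum_mul]
    have htrace_sum : ∑ i, N i i = N.trace := by simp [Matrix.trace, Matrix.diag]
    rw [htrace_sum, htrN]
    -- final constant computation
    have hTabs : |T.det| = (Real.sqrt Δt)^d * Real.sqrt a₀.det := by
      rw [hTdet, abs_mul, abs_of_nonneg (by positivity : (0:ℝ) ≤ (Real.sqrt Δt)^d),
        ← Real.sqrt_sq_eq_abs, sq, hdetS2]
    rw [hTabs, hc₀, hα]
    have h2π : (0:ℝ) < 2 * π := by positivity
    have e1 : (Real.sqrt Δt)^d = Δt ^ ((d:ℝ)/2) := by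
      rw [Real.sqrt_eq_rpow, ← Real.rpow_natCast (Δt ^ ((1:ℝ)/2)) d, ← Real.rpow_mul hΔt.le]
      congr 1; ring
    have e2 : (√(2*π))^d = (2*π) ^ ((d:ℝ)/2) := by
      rw [Real.sqrt_eq_rpow, ← Real.rpow_natCast ((2*π) ^ ((1:ℝ)/2)) d, ← Real.rpow_mul h2π.le]
      congr 1; ring
    have e3 : (2 * π * Δt) ^ (-(d:ℝ)/2) = (2*π) ^ (-(d:ℝ)/2) * Δt ^ (-(d:ℝ)/2) :=
      Real.mul_rpow h2π.le hΔt.le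
    have e4 : Real.sqrt a₀.det = a₀.det ^ ((1:ℝ)/2) := Real.sqrt_eq_rpow _
    rw [e1, e2, e3, e4]
    have hz : (d:ℝ)/2 + -(d:ℝ)/2 = 0 := by ring
    have c1 : Δt ^ ((d:ℝ)/2) * Δt ^ (-(d:ℝ)/2) = 1 := by
      rw [← Real.rpow_add hΔt, hz, Real.rpow_zero]
    have c2 : (2*π) ^ ((d:ℝ)/2) * (2*π) ^ (-(d:ℝ)/2) = 1 := by
      rw [← Real.rpow_add h2π, hz, Real.rpow_zero]
    have c3 : a₀.det ^ ((1:ℝ)/2) * a₀.det ^ (-(1:ℝ)/2) = 1 := by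
      rw [← Real.rpow_add hdetA, show (1:ℝ)/2 + -(1:ℝ)/2 = 0 by ring, Real.rpow_zero]
    have hfin : (1 - 1 / 2 * (a * a₀⁻¹).trace) + 1 / 2 * (a * a₀⁻¹).trace = 1 := by ring
    calc Δt ^ ((d:ℝ)/2) * a₀.det ^ ((1:ℝ)/2) *
          ((2*π) ^ (-(d:ℝ)/2) * Δt ^ (-(d:ℝ)/2) * a₀.det ^ (-(1:ℝ)/2) *
            ((1 - 1 / 2 * (a * a₀⁻¹).trace) * (2*π) ^ ((d:ℝ)/2)
              + 1 / 2 * ((a * a₀⁻¹).trace * (2*π) ^ ((d:ℝ)/2))))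
        = (Δt ^ ((d:ℝ)/2) * Δt ^ (-(d:ℝ)/2)) * (a₀.det ^ ((1:ℝ)/2) * a₀.det ^ (-(1:ℝ)/2)) *
          ((2*π) ^ (-(d:ℝ)/2) * (2*π) ^ ((d:ℝ)/2)) *
          ((1 - 1 / 2 * (a * a₀⁻¹).trace) + 1 / 2 * (a * a₀⁻¹).trace) := by ring
      _ = 1 := by rw [c1, c3, mul_comm ((2*π) ^ (-(d:ℝ)/2)), c2, hfin]; norm_num
  · -- (ii) zero mean
    intro i
    have h := integral_neg_eq_self (fun x : Fin d → ℝ => x i * rho d Δt a₀ a x)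
      (volume : Measure (Fin d → ℝ))
    simp only [Pi.neg_apply, rho_neg, neg_mul] at h
    rw [integral_neg] at h
    linarith
  · -- (iii) nonnegativity
    intro htr x
    have h1 : (0:ℝ) < 2 * Real.pi * Δt := by positivity
    have hM : (a₀⁻¹ * a * a₀⁻¹).PosSemidef := by
      have h2 := ha.conjTranspose_mul_mul_same (B := a₀⁻¹)
      rwa [(ha₀.inv.posSemidef.1 : (a₀⁻¹)ᴴ = a₀⁻¹)] at h2
    have hq : 0 ≤ x ⬝ᵥ (a₀⁻¹ * a * a₀⁻¹).mulVec x := by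
      simpa using hM.dotProduct_mulVec_nonneg x
    have heta : 0 ≤ eta d Δt a₀ a x := by
      unfold eta
      have : 0 ≤ (1 / (2 * Δt)) * (x ⬝ᵥ (a₀⁻¹ * a * a₀⁻¹).mulVec x) := by positivity
      linarith
    unfold rho
    have := ha₀.det_pos
    positivity
end
end

section
/- Let (Ω,F,P) be a probability space, G ⊆ F a sub-σ-algebra, and μ > 0, Δt > 0 with μ·Δt < 1. Let F : Ω×ℝ → ℝ be such that for each y ∈ ℝ the map ω ↦ F(ω,y) is G-measurable and integrable, and for P-a.e. ω the map y ↦ F(ω,y) is μ-Lipschitz. For ξ ∈ L²(P), let Y(ξ) denote the unique G-measurable random variable solving Y(ξ) = E[ξ|G] − F(·,Y(ξ))·Δt P-a.s. (which exists and is unique since μ·Δt < 1). If ξ¹ ≤ ξ² P-a.s., then Y(ξ¹) ≤ Y(ξ²) P-a.s. -/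
open MeasureTheory ProbabilityTheory

noncomputable section

/-- **One-step comparison for the implicit backward scheme.**
Let `G ⊆ F` be a sub-σ-algebra, `μ > 0`, `Δt > 0` with `μ·Δt < 1`, and let
`F : Ω×ℝ → ℝ` be `G`-measurable and integrable in `ω` for each `y`, and a.s.
`μ`-Lipschitz in `y`.  If `Y(ξ)` denotes the unique `G`-measurable solution of
`Y(ξ) = E[ξ|G] − F(·,Y(ξ))·Δt` a.s., then `ξ¹ ≤ ξ²` a.s. implies `Y(ξ¹) ≤ Y(ξ²)` a.s. -/
theorem one_step_comparison
    (Ω : Type) [m0 : MeasurableSpace Ω] (P : Measure Ω) [IsProbabilityMeasure P]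
    (G : MeasurableSpace Ω) (hG : G ≤ m0)
    (μ Δt : ℝ) (hμ : 0 < μ) (hΔt : 0 < Δt) (hμΔt : μ * Δt < 1)
    (F : Ω → ℝ → ℝ)
    (hFmeas : ∀ y : ℝ, Measurable[G] fun ω => F ω y)
    (hFint : ∀ y : ℝ, Integrable (fun ω => F ω y) P)
    (hFlip : ∀ᵐ ω ∂P, ∀ y1 y2 : ℝ, |F ω y1 - F ω y2| ≤ μ * |y1 - y2|)
    (ξ1 ξ2 : Ω → ℝ) (hξ1 : MemLp ξ1 2 P) (hξ2 : MemLp ξ2 2 P)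
    (Y1 Y2 : Ω → ℝ)
    (hY1meas : Measurable[G] Y1) (hY2meas : Measurable[G] Y2)
    (hY1 : Y1 =ᵐ[P] fun ω => (P[ξ1|G]) ω - F ω (Y1 ω) * Δt)
    (hY2 : Y2 =ᵐ[P] fun ω => (P[ξ2|G]) ω - F ω (Y2 ω) * Δt)
    (hle : ξ1 ≤ᵐ[P] ξ2) :
    Y1 ≤ᵐ[P] Y2 := by
  have hcond : (P[ξ1|G]) ≤ᵐ[P] (P[ξ2|G]) :=
    condExp_mono (hξ1.integrable one_le_two) (hξ2.integrable one_le_two) hle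
  filter_upwards [hY1, hY2, hFlip, hcond] with ω h1 h2 hlip hc
  by_contra h
  push_neg at h
  have hd : 0 < Y1 ω - Y2 ω := by linarith
  have key : Y1 ω - Y2 ω = (P[ξ1|G]) ω - (P[ξ2|G]) ω + (F ω (Y2 ω) - F ω (Y1 ω)) * Δt := by
    linear_combination h1 - h2
  have hF : F ω (Y2 ω) - F ω (Y1 ω) ≤ μ * (Y1 ω - Y2 ω) := by
    have := hlip (Y2 ω) (Y1 ω)
    have habs : |Y2 ω - Y1 ω| = Y1 ω - Y2 ω := by
      rw [abs_sub_comm, abs_of_pos hd]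
    rw [habs] at this
    calc F ω (Y2 ω) - F ω (Y1 ω) ≤ |F ω (Y2 ω) - F ω (Y1 ω)| := le_abs_self _
      _ ≤ μ * (Y1 ω - Y2 ω) := this
  have : Y1 ω - Y2 ω ≤ μ * (Y1 ω - Y2 ω) * Δt := by
    rw [key]; nlinarith [hΔt.le]
  nlinarith
end
end
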